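/- If Δ is a simplicial complex whose Stanley-Reisner ideal I_Δ is minimally generated by exactly two squarefree monomials, then Δ is vertex decomposable. -/

import Mathlib

open MvPolynomial

namespace Paper

abbrev R (K : Type) [Field K] (n : ℕ) := MvPolynomial (Fin n) K

noncomputable def mon (K : Type) [Field K] {n : ℕ} (a : Fin n →₀ ℕ) : R K n :=
  monomial a 1

def mdeg {n : ℕ} (a : Fin n →₀ ℕ) : ℕ := a.sum fun _ e => e

def IsSqfree {n : ℕ} (a : Fin n →₀ ℕ) : Prop := ∀ i, a i ≤ 1

variable {K : Type} [Field K] {n : ℕ}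

/-- A monomial ideal: an ideal generated by a set of monomials. -/
def IsMonomialIdeal (I : Ideal (R K n)) : Prop :=
  ∃ S : Set (Fin n →₀ ℕ), I = Ideal.span ((mon K) '' S)

/-- The (exponent vectors of the) minimal monomial generators `G(I)` of a monomial
ideal: monomials in `I` such that no proper divisor lies in `I`. -/
def minGens (I : Ideal (R K n)) : Set (Fin n →₀ ℕ) :=
  { a | mon K a ∈ I ∧ ∀ (b : Fin n →₀ ℕ) (i : Fin n),
      a = b + Finsupp.single i 1 → mon K b ∉ I }

/-- Polymatroidal: a monomial ideal generated in a single degree satisfying the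
exchange property. -/
def IsPolymatroidal (I : Ideal (R K n)) : Prop :=
  IsMonomialIdeal I ∧
  (∃ d, ∀ a ∈ minGens I, mdeg a = d) ∧
  ∀ u ∈ minGens I, ∀ v ∈ minGens I, ∀ i : Fin n, v i < u i →
    ∃ j : Fin n, u j < v j ∧
      ∃ w ∈ minGens I, w + Finsupp.single i 1 = u + Finsupp.single j 1

/-- Matroidal: squarefree polymatroidal. -/
def IsMatroidal (I : Ideal (R K n)) : Prop :=
  IsPolymatroidal I ∧ ∀ a ∈ minGens I, IsSqfree a

/-- Weakly polymatroidal with respect to the variable ordering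
`x_{σ 0} > x_{σ 1} > ... > x_{σ (n-1)}`. -/
def IsWeaklyPolymatroidalWrt (σ : Equiv.Perm (Fin n)) (I : Ideal (R K n)) : Prop :=
  IsMonomialIdeal I ∧
  ∀ u ∈ minGens I, ∀ v ∈ minGens I, ∀ t : Fin n,
    (∀ s, s < t → u (σ s) = v (σ s)) → v (σ t) < u (σ t) →
    ∃ j : Fin n, t < j ∧
      ∃ w : Fin n →₀ ℕ,
        w + Finsupp.single (σ j) 1 = v + Finsupp.single (σ t) 1 ∧ mon K w ∈ I

/-- Weakly polymatroidal with respect to the standard ordering `x_1 > ... > x_n`. -/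
def IsWeaklyPolymatroidal (I : Ideal (R K n)) : Prop :=
  IsWeaklyPolymatroidalWrt (Equiv.refl (Fin n)) I

/-- Vertex splittable monomial ideals (Moradi–Khosh-Ahang). Ideals of
`K[V \ {x}]` are encoded as ideals of `R` whose minimal generators do not
involve the variable `x`. -/
inductive VertexSplittable : Ideal (R K n) → Prop
  | principal (a : Fin n →₀ ℕ) : VertexSplittable (Ideal.span {mon K a})
  | bot : VertexSplittable ⊥
  | top : VertexSplittable ⊤
  | split (x : Fin n) (I₁ I₂ : Ideal (R K n)) :
      VertexSplittable I₁ → VertexSplittable I₂ →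
      (∀ a ∈ minGens I₁, a x = 0) → (∀ a ∈ minGens I₂, a x = 0) →
      I₂ ≤ I₁ →
      minGens (Ideal.span {(X x : R K n)} * I₁ + I₂)
        = minGens (Ideal.span {(X x : R K n)} * I₁) ∪ minGens I₂ →
      minGens (Ideal.span {(X x : R K n)} * I₁) ∩ minGens I₂ = ∅ →
      VertexSplittable (Ideal.span {(X x : R K n)} * I₁ + I₂)

/-- Linear quotients: some ordering of the minimal monomial generators such that
each successive colon ideal is generated by a subset of the variables. -/
def HasLinearQuotients (I : Ideal (R K n)) : Prop :=
  IsMonomialIdeal I ∧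
  ∃ L : List (Fin n →₀ ℕ), L.Nodup ∧ {a | a ∈ L} = minGens I ∧
    ∀ (j : ℕ) (hj : j < L.length), 0 < j →
      ∃ S : Set (Fin n),
        Submodule.colon (Ideal.span ((mon K) '' {a | a ∈ L.take j}))
            (Ideal.span {mon K (L.get ⟨j, hj⟩)})
          = Ideal.span ((fun i => (X i : R K n)) '' S)


/-- A (possibly void) abstract simplicial complex on the vertex set `Fin n`. -/
structure SComplex (n : ℕ) where
  faces : Finset (Finset (Fin n))
  down : ∀ F ∈ faces, ∀ G ⊆ F, G ∈ faces

variable {n : ℕ}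

def SComplex.IsFacet (Δ : SComplex n) (F : Finset (Fin n)) : Prop :=
  F ∈ Δ.faces ∧ ∀ G ∈ Δ.faces, F ⊆ G → G = F

/-- Deletion of a vertex. -/
def SComplex.del (Δ : SComplex n) (x : Fin n) : SComplex n where
  faces := Δ.faces.filter (fun F => x ∉ F)
  down := by
    intro F hF G hG
    simp only [Finset.mem_filter] at *
    exact ⟨Δ.down F hF.1 G hG, fun hx => hF.2 (hG hx)⟩

/-- Link of a vertex. -/
def SComplex.lk (Δ : SComplex n) (x : Fin n) : SComplex n where
  faces := Δ.faces.filter (fun F => x ∉ F ∧ insert x F ∈ Δ.faces)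
  down := by
    intro F hF G hG
    simp only [Finset.mem_filter] at *
    refine ⟨Δ.down F hF.1 G hG, fun hx => hF.2.1 (hG hx), ?_⟩
    exact Δ.down _ hF.2.2 _ (Finset.insert_subset_insert x hG)

/-- Vertex decomposability, defined recursively via shedding vertices. -/
inductive VertexDecomposable : SComplex n → Prop
  | simplex (Δ : SComplex n) (F : Finset (Fin n)) :
      Δ.faces = F.powerset → VertexDecomposable Δ
  | shed (Δ : SComplex n) (x : Fin n) :
      VertexDecomposable (Δ.del x) → VertexDecomposable (Δ.lk x) →
      (∀ F ∈ (Δ.lk x).faces, ¬ (Δ.del x).IsFacet F) →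
      VertexDecomposable Δ

/-- Shellability (non-pure, Björner–Wachs). -/
def SComplex.Shellable (Δ : SComplex n) : Prop :=
  ∃ L : List (Finset (Fin n)), L.Nodup ∧ {F | F ∈ L} = {F | Δ.IsFacet F} ∧
    ∀ (i j : ℕ) (hi : i < L.length) (hj : j < L.length), i < j →
      ∃ x ∈ L.get ⟨j, hj⟩ \ L.get ⟨i, hi⟩,
        ∃ (l : ℕ) (hl : l < j),
          L.get ⟨j, hj⟩ \ L.get ⟨l, Nat.lt_trans hl hj⟩ = {x}

/-- The Alexander dual complex `Δ^∨ = { V \ A : A ∉ Δ }`. -/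
noncomputable def SComplex.dual (Δ : SComplex n) : SComplex n where
  faces := Finset.univ.filter (fun B => Bᶜ ∉ Δ.faces)
  down := by
    classical
    intro F hF G hG
    simp only [Finset.mem_filter, Finset.mem_univ, true_and] at *
    intro hGc
    exact hF (Δ.down _ hGc _ (Finset.compl_subset_compl.2 hG))


/-- The squarefree exponent vector of a set of vertices. -/
noncomputable def sqmon {n : ℕ} (F : Finset (Fin n)) : Fin n →₀ ℕ :=
  ∑ i ∈ F, Finsupp.single i 1

/-- The Stanley–Reisner ideal of `Δ`. -/
noncomputable def srIdeal (K : Type) [Field K] {n : ℕ} (Δ : SComplex n) :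
    Ideal (MvPolynomial (Fin n) K) :=
  Ideal.span ((fun F => mon K (sqmon F)) '' {F | F ∉ Δ.faces})


section CM
variable (A : Type) [CommRing A]

/-- Krull dimension of a module: the dimension of `A / ann M`. -/
noncomputable def moduleDim (M : Type) [AddCommGroup M] [Module A M] : WithBot ℕ∞ :=
  ringKrullDim (A ⧸ Submodule.annihilator (⊤ : Submodule A M))

/-- `rs` is an `M`-regular sequence: each entry is a nonzerodivisor on the quotient
of `M` by the previous entries. -/
def IsRegSeq (M : Type) [AddCommGroup M] [Module A M] (rs : List A) : Prop :=
  ∀ (i : ℕ) (hi : i < rs.length),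
    ∀ m : M ⧸ (Ideal.span {r | r ∈ rs.take i} • (⊤ : Submodule A M)),
      rs.get ⟨i, hi⟩ • m = 0 → m = 0

/-- Depth of `M` with respect to the ideal `J`: the supremum of lengths of
`M`-regular sequences contained in `J`. -/
noncomputable def moduleDepth (J : Ideal A) (M : Type) [AddCommGroup M] [Module A M] : ℕ :=
  sSup {k | ∃ rs : List A, rs.length = k ∧ (∀ r ∈ rs, r ∈ J) ∧ IsRegSeq A M rs}

/-- Cohen–Macaulay module (with respect to the ideal `J` playing the role of the
maximal ideal): zero, or depth equals Krull dimension. -/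
def IsCMmod (J : Ideal A) (M : Type) [AddCommGroup M] [Module A M] : Prop :=
  Subsingleton M ∨ moduleDim A M = ((moduleDepth A J M : ℕ∞) : WithBot ℕ∞)

/-- Sequentially Cohen–Macaulay module: a filtration `0 = M₀ ⊂ ... ⊂ M_r = N` with
Cohen–Macaulay quotients of strictly increasing Krull dimension. -/
def IsSeqCM (J : Ideal A) (N : Type) [AddCommGroup N] [Module A N] : Prop :=
  ∃ (r : ℕ) (c : Fin (r + 1) → Submodule A N),
    c 0 = ⊥ ∧ c (Fin.last r) = ⊤ ∧
    (∀ i : Fin r, c i.castSucc ≤ c i.succ) ∧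
    (∀ i : Fin r,
      IsCMmod A J (↥(c i.succ) ⧸ (Submodule.comap (c i.succ).subtype (c i.castSucc)))) ∧
    (∀ i j : Fin r, i < j →
      moduleDim A (↥(c i.succ) ⧸ (Submodule.comap (c i.succ).subtype (c i.castSucc)))
        < moduleDim A (↥(c j.succ) ⧸ (Submodule.comap (c j.succ).subtype (c j.castSucc))))

end CM

variable {K : Type} [Field K] {n : ℕ}

/-- The irrelevant maximal ideal `(x_1, ..., x_n)`. -/
noncomputable def maxIdeal (K : Type) [Field K] (n : ℕ) : Ideal (MvPolynomial (Fin n) K) :=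
  Ideal.span (Set.range (X : Fin n → MvPolynomial (Fin n) K))

section Res

/-- The differential of a free complex given by a matrix of polynomials. -/
noncomputable def resDiff (β : ℕ → ℕ)
    (Mt : (i : ℕ) → Fin (β (i + 1)) → Fin (β i) → MvPolynomial (Fin n) K) (i : ℕ) :
    (Fin (β (i + 1)) →₀ MvPolynomial (Fin n) K) →ₗ[MvPolynomial (Fin n) K]
      (Fin (β i) →₀ MvPolynomial (Fin n) K) :=
  Finsupp.lsum (MvPolynomial (Fin n) K) fun j =>
    LinearMap.toSpanSingleton (MvPolynomial (Fin n) K) _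
      (∑ k : Fin (β i), Finsupp.single k (Mt i j k))

/-- The augmentation map sending basis elements to the generators `g`. -/
noncomputable def resAug (β₀ : ℕ) (g : Fin β₀ → MvPolynomial (Fin n) K) :
    (Fin β₀ →₀ MvPolynomial (Fin n) K) →ₗ[MvPolynomial (Fin n) K] MvPolynomial (Fin n) K :=
  Finsupp.lsum (MvPolynomial (Fin n) K) fun j =>
    LinearMap.toSpanSingleton (MvPolynomial (Fin n) K) _ (g j)

/-- A graded free resolution of the ideal `I`, recorded by Betti numbers `β`,
degree shifts `dg`, homogeneous generators `g` of `I`, and matrices `Mt` of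
homogeneous entries, which is exact. -/
structure GradedRes (I : Ideal (MvPolynomial (Fin n) K)) where
  β : ℕ → ℕ
  dg : (i : ℕ) → Fin (β i) → ℕ
  g : Fin (β 0) → MvPolynomial (Fin n) K
  hg : ∀ j, (g j).IsHomogeneous (dg 0 j)
  Mt : (i : ℕ) → Fin (β (i + 1)) → Fin (β i) → MvPolynomial (Fin n) K
  hMt : ∀ i j k, Mt i j k = 0 ∨
    (dg i k ≤ dg (i + 1) j ∧ (Mt i j k).IsHomogeneous (dg (i + 1) j - dg i k))
  hrange : LinearMap.range (resAug (β 0) g) = I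
  hexact0 : LinearMap.ker (resAug (β 0) g) = LinearMap.range (resDiff β Mt 0)
  hexact : ∀ i, LinearMap.ker (resDiff β Mt i) = LinearMap.range (resDiff β Mt (i + 1))

/-- Castelnuovo–Mumford regularity, as the infimum over all graded free
resolutions of the maximum of `(shift) - (homological degree)`. -/
noncomputable def reg (I : Ideal (MvPolynomial (Fin n) K)) : ℕ∞ :=
  sInf { r : ℕ∞ | ∃ Res : GradedRes I,
    ∀ (i : ℕ) (j : Fin (Res.β i)), (Res.dg i j : ℕ∞) ≤ r + i }

/-- `I` has a `d`-linear resolution. -/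
def HasLinearRes (I : Ideal (MvPolynomial (Fin n) K)) (d : ℕ) : Prop :=
  ∃ Res : GradedRes I, ∀ (i : ℕ) (j : Fin (Res.β i)), Res.dg i j = d + i

/-- The ideal generated by the degree-`d` elements of `I`. -/
noncomputable def compIdeal (I : Ideal (MvPolynomial (Fin n) K)) (d : ℕ) : Ideal (MvPolynomial (Fin n) K) :=
  Ideal.span { f | f ∈ I ∧ f.IsHomogeneous d }

/-- Componentwise linear ideal. -/
def ComponentwiseLinear (I : Ideal (MvPolynomial (Fin n) K)) : Prop :=
  ∀ d, compIdeal I d = ⊥ ∨ HasLinearRes (compIdeal I d) d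

end Res

lemma span_mon_coeff {S : Set (Fin n →₀ ℕ)} {f : R K n}
    (hf : f ∈ Ideal.span ((mon K) '' S)) {d : Fin n →₀ ℕ} (hd : coeff d f ≠ 0) :
    ∃ s ∈ S, s ≤ d := by
  induction hf using Submodule.span_induction generalizing d with
  | mem x hx =>
    obtain ⟨s, hs, rfl⟩ := hx
    rw [mon, coeff_monomial] at hd
    split at hd
    · exact ⟨s, hs, le_of_eq (by assumption)⟩
    · exact absurd rfl hd
  | zero => simp at hd
  | add x y hx hy ihx ihy =>
    rw [coeff_add] at hd
    rcases (by by_contra h; push_neg at h; rw [h.1, h.2, add_zero] at hd; exact hd rfl :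
      coeff d x ≠ 0 ∨ coeff d y ≠ 0) with h | h
    · exact ihx h
    · exact ihy h
  | smul r x hx ih =>
    rw [smul_eq_mul, coeff_mul] at hd
    obtain ⟨p, hp, hne⟩ := Finset.exists_ne_zero_of_sum_ne_zero hd
    obtain ⟨s, hs, hle⟩ := ih (right_ne_zero_of_mul hne)
    rw [Finset.HasAntidiagonal.mem_antidiagonal] at hp
    exact ⟨s, hs, hle.trans (by simp [← hp])⟩

lemma mem_span_mon_iff {S : Set (Fin n →₀ ℕ)} {a : Fin n →₀ ℕ} :
    mon K a ∈ Ideal.span ((mon K) '' S) ↔ ∃ s ∈ S, s ≤ a := by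
  constructor
  · intro hf
    refine span_mon_coeff hf (d := a) ?_
    rw [mon, coeff_monomial, if_pos rfl]
    exact one_ne_zero
  · rintro ⟨s, hs, hle⟩
    have : mon K a = mon K (a - s) * mon K s := by
      rw [mon, mon, mon, monomial_mul, one_mul, tsub_add_cancel_of_le hle]
    rw [this]
    exact Ideal.mul_mem_left _ _ (Ideal.subset_span ⟨s, hs, rfl⟩)

lemma sqmon_apply (F : Finset (Fin n)) (i : Fin n) :
    sqmon F i = if i ∈ F then 1 else 0 := by
  rw [sqmon, Finset.sum_apply']
  split
  · rw [Finset.sum_eq_single i (fun b _ hb => Finsupp.single_eq_of_ne' hb)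
      (fun h => absurd (by assumption) h), Finsupp.single_eq_same]
  · exact Finset.sum_eq_zero fun b hb =>
      Finsupp.single_eq_of_ne (fun h => (by assumption : i ∉ F) (h ▸ hb))

lemma sqmon_le_iff {G F : Finset (Fin n)} : sqmon G ≤ sqmon F ↔ G ⊆ F := by
  constructor
  · intro h i hi
    have := h i
    rw [sqmon_apply, sqmon_apply, if_pos hi] at this
    by_contra hiF
    rw [if_neg hiF] at this; omega
  · intro h i
    rw [sqmon_apply, sqmon_apply]
    split
    · rw [if_pos (h (by assumption))]
    · exact Nat.zero_le _

lemma mdeg_add (a b : Fin n →₀ ℕ) : mdeg (a + b) = mdeg a + mdeg b := by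
  simpa [mdeg] using Finsupp.sum_add_index' (fun _ => rfl) (fun _ _ _ => rfl)

lemma mdeg_single (i : Fin n) : mdeg (Finsupp.single i (1:ℕ)) = 1 := by
  simp [mdeg, Finsupp.sum_single_index]

lemma exists_minGen_le {I : Ideal (R K n)} {a : Fin n →₀ ℕ} (ha : mon K a ∈ I) :
    ∃ g ∈ minGens I, g ≤ a := by
  suffices H : ∀ (k : ℕ) (a : Fin n →₀ ℕ), mdeg a ≤ k → mon K a ∈ I →
      ∃ g ∈ minGens I, g ≤ a from H (mdeg a) a le_rfl ha
  intro k
  induction k with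
  | zero =>
    intro a hk ha
    by_cases hmin : ∀ (b : Fin n →₀ ℕ) (i : Fin n), a = b + Finsupp.single i 1 → mon K b ∉ I
    · exact ⟨a, ⟨ha, hmin⟩, le_refl a⟩
    · push_neg at hmin
      obtain ⟨b, i, hab, _⟩ := hmin
      exfalso
      have := mdeg_add b (Finsupp.single i 1)
      rw [← hab, mdeg_single] at this
      omega
  | succ k ih =>
    intro a hk ha
    by_cases hmin : ∀ (b : Fin n →₀ ℕ) (i : Fin n), a = b + Finsupp.single i 1 → mon K b ∉ I
    · exact ⟨a, ⟨ha, hmin⟩, le_refl a⟩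
    · push_neg at hmin
      obtain ⟨b, i, hab, hb⟩ := hmin
      have hdeg : mdeg b ≤ k := by
        have := mdeg_add b (Finsupp.single i 1)
        rw [← hab, mdeg_single] at this
        omega
      obtain ⟨g, hg, hgb⟩ := ih b hdeg hb
      exact ⟨g, hg, hgb.trans (hab ▸ le_self_add)⟩

lemma del_faces (Δ : SComplex n) (x : Fin n) :
    (Δ.del x).faces = Δ.faces.filter (fun F => x ∉ F) := rfl

lemma lk_faces (Δ : SComplex n) (x : Fin n) :
    (Δ.lk x).faces = Δ.faces.filter (fun F => x ∉ F ∧ insert x F ∈ Δ.faces) := rfl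

lemma VD_one : ∀ (k : ℕ) (Δ : SComplex n) (A U : Finset (Fin n)), U.card ≤ k → U.Nonempty →
    U ⊆ A → Δ.faces = A.powerset.filter (fun F => ¬ U ⊆ F) → VertexDecomposable Δ := by
  intro k
  induction k with
  | zero =>
    intro Δ A U hk hU _ _
    rw [Nat.le_zero, Finset.card_eq_zero] at hk
    exact absurd hk (Finset.nonempty_iff_ne_empty.mp hU)
  | succ k ih =>
    intro Δ A U hk hU hUA hf
    obtain ⟨y, hy⟩ := hU
    have hyA : y ∈ A := hUA hy
    by_cases hU1 : U = {y}
    · apply VertexDecomposable.simplex Δ (A.erase y)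
      rw [hf]
      ext F
      simp only [Finset.mem_filter, Finset.mem_powerset, Finset.subset_erase, hU1,
        Finset.singleton_subset_iff]
    · have hUe : (U.erase y).Nonempty := by
        rw [Finset.erase_nonempty hy]
        exact (Finset.nontrivial_iff_ne_singleton hy).mpr hU1
      apply VertexDecomposable.shed Δ y
      · apply VertexDecomposable.simplex _ (A.erase y)
        rw [del_faces, hf]
        ext F
        simp only [Finset.mem_filter, Finset.mem_powerset, Finset.mem_erase,
          Finset.subset_erase]
        constructor
        · rintro ⟨⟨hFA, _⟩, hyF⟩
          exact ⟨hFA, hyF⟩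
        · rintro ⟨hFA, hyF⟩
          exact ⟨⟨hFA, fun hUF => hyF (hUF hy)⟩, hyF⟩
      · apply ih (Δ.lk y) (A.erase y) (U.erase y) ?_ hUe (Finset.erase_subset_erase _ hUA)
        · rw [lk_faces, hf]
          ext F
          simp only [Finset.mem_filter, Finset.mem_powerset, Finset.subset_erase]
          constructor
          · rintro ⟨⟨hFA, _⟩, hyF, _, hUiF⟩
            refine ⟨⟨hFA, hyF⟩, fun hUe => hUiF ?_⟩
            intro u huU
            by_cases hu : u = y
            · exact hu ▸ Finset.mem_insert_self y F
            · exact Finset.mem_insert_of_mem (hUe (Finset.mem_erase.mpr ⟨hu, huU⟩))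
          · rintro ⟨⟨hFA, hyF⟩, hUeF⟩
            have hUF : ¬ U ⊆ F := fun hUF => hUeF ((Finset.erase_subset y U).trans hUF)
            refine ⟨⟨hFA, hUF⟩, hyF, Finset.insert_subset hyA hFA, fun hUiF => hUeF ?_⟩
            intro u huU
            have := hUiF (Finset.mem_of_mem_erase huU)
            rcases Finset.mem_insert.mp this with h | h
            · exact absurd h (Finset.mem_erase.mp huU).1
            · exact h
        · have := Finset.card_erase_of_mem hy
          omega
      · -- facet condition
        intro F hF hfacet
        rw [lk_faces, Finset.mem_filter, hf, Finset.mem_filter, Finset.mem_powerset] at hF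
        obtain ⟨⟨hFA, _⟩, hyF, hins⟩ := hF
        rw [Finset.mem_filter, Finset.mem_powerset] at hins
        have htop : A.erase y ∈ (Δ.del y).faces := by
          rw [del_faces, Finset.mem_filter, hf, Finset.mem_filter, Finset.mem_powerset]
          exact ⟨⟨Finset.erase_subset y A, fun hUA' => (Finset.mem_erase.mp (hUA' hy)).1 rfl⟩,
            Finset.notMem_erase y A⟩
        have hFsub : F ⊆ A.erase y := Finset.subset_erase.mpr ⟨hFA, hyF⟩
        have := hfacet.2 _ htop hFsub
        apply hins.2
        rw [← this]
        intro u huU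
        by_cases hu : u = y
        · subst hu; exact Finset.mem_insert_self u _
        · exact Finset.mem_insert_of_mem (Finset.mem_erase.mpr ⟨hu, hUA huU⟩)

lemma VD_two : ∀ (k : ℕ) (Δ : SComplex n) (A U V : Finset (Fin n)), U.card + V.card ≤ k →
    U.Nonempty → V.Nonempty → U ⊆ A → V ⊆ A →
    Δ.faces = A.powerset.filter (fun F => ¬ U ⊆ F ∧ ¬ V ⊆ F) → VertexDecomposable Δ := by
  intro k
  induction k with
  | zero =>
    intro Δ A U V hk hU _ _ _ _
    have := hU.card_pos
    omega
  | succ k ih =>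
    intro Δ A U V hk hU hV hUA hVA hf
    by_cases hUV : U ⊆ V
    · apply VD_one U.card Δ A U le_rfl hU hUA
      rw [hf]
      ext F
      simp only [Finset.mem_filter, Finset.mem_powerset]
      exact ⟨fun ⟨h1, h2, _⟩ => ⟨h1, h2⟩,
        fun ⟨h1, h2⟩ => ⟨h1, h2, fun hVF => h2 (hUV.trans hVF)⟩⟩
    by_cases hVU : V ⊆ U
    · apply VD_one V.card Δ A V le_rfl hV hVA
      rw [hf]
      ext F
      simp only [Finset.mem_filter, Finset.mem_powerset]
      exact ⟨fun ⟨h1, _, h3⟩ => ⟨h1, h3⟩,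
        fun ⟨h1, h2⟩ => ⟨h1, fun hUF => h2 (hVU.trans hUF), h2⟩⟩
    by_cases hx : (U ∩ V).Nonempty
    · obtain ⟨x, hxm⟩ := hx
      have hxU : x ∈ U := Finset.mem_of_mem_inter_left hxm
      have hxV : x ∈ V := Finset.mem_of_mem_inter_right hxm
      have hxA : x ∈ A := hUA hxU
      have hUe : (U.erase x).Nonempty := by
        rw [Finset.erase_nonempty hxU]
        refine (Finset.nontrivial_iff_ne_singleton hxU).mpr fun h => hUV ?_
        rw [h]
        exact Finset.singleton_subset_iff.mpr hxV
      have hVe : (V.erase x).Nonempty := by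
        rw [Finset.erase_nonempty hxV]
        refine (Finset.nontrivial_iff_ne_singleton hxV).mpr fun h => hVU ?_
        rw [h]
        exact Finset.singleton_subset_iff.mpr hxU
      apply VertexDecomposable.shed Δ x
      · apply VertexDecomposable.simplex _ (A.erase x)
        rw [del_faces, hf]
        ext F
        simp only [Finset.mem_filter, Finset.mem_powerset, Finset.subset_erase]
        constructor
        · rintro ⟨⟨hFA, _⟩, hxF⟩
          exact ⟨hFA, hxF⟩
        · rintro ⟨hFA, hxF⟩
          exact ⟨⟨hFA, fun h => hxF (h hxU), fun h => hxF (h hxV)⟩, hxF⟩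
      · refine ih (Δ.lk x) (A.erase x) (U.erase x) (V.erase x) ?_ hUe hVe
          (Finset.erase_subset_erase _ hUA) (Finset.erase_subset_erase _ hVA) ?_
        · have h1 := Finset.card_erase_of_mem hxU
          have h2 := Finset.card_erase_of_mem hxV
          have := hU.card_pos
          have := hV.card_pos
          omega
        · rw [lk_faces, hf]
          ext F
          simp only [Finset.mem_filter, Finset.mem_powerset, Finset.subset_erase]
          constructor
          · rintro ⟨⟨hFA, _, _⟩, hxF, _, hUiF, hViF⟩
            exact ⟨⟨hFA, hxF⟩, fun h => hUiF (Finset.subset_insert_iff.mpr h),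
              fun h => hViF (Finset.subset_insert_iff.mpr h)⟩
          · rintro ⟨⟨hFA, hxF⟩, hUeF, hVeF⟩
            refine ⟨⟨hFA, fun h => hUeF ((Finset.erase_subset x U).trans h),
              fun h => hVeF ((Finset.erase_subset x V).trans h)⟩, hxF,
              Finset.insert_subset hxA hFA, ?_, ?_⟩
            · exact fun h => hUeF (Finset.subset_insert_iff.mp h)
            · exact fun h => hVeF (Finset.subset_insert_iff.mp h)
      · intro F hF hfacet
        rw [lk_faces, Finset.mem_filter, hf, Finset.mem_filter, Finset.mem_powerset] at hF
        obtain ⟨⟨hFA, _, _⟩, hxF, hins⟩ := hF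
        rw [Finset.mem_filter, Finset.mem_powerset] at hins
        have htop : A.erase x ∈ (Δ.del x).faces := by
          rw [del_faces, Finset.mem_filter, hf, Finset.mem_filter, Finset.mem_powerset]
          exact ⟨⟨Finset.erase_subset x A, fun h => (Finset.mem_erase.mp (h hxU)).1 rfl,
            fun h => (Finset.mem_erase.mp (h hxV)).1 rfl⟩, Finset.notMem_erase x A⟩
        have hFsub : F ⊆ A.erase x := Finset.subset_erase.mpr ⟨hFA, hxF⟩
        have heq := hfacet.2 _ htop hFsub
        apply hins.2.1
        rw [← heq, Finset.subset_insert_iff]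
        exact Finset.erase_subset_erase _ hUA
    · rw [Finset.not_nonempty_iff_eq_empty] at hx
      obtain ⟨x, hxU⟩ := hU
      have hxV : x ∉ V := fun h =>
        Finset.notMem_empty x (hx ▸ Finset.mem_inter_of_mem hxU h)
      have hxA : x ∈ A := hUA hxU
      have hVsub : V ⊆ A.erase x := Finset.subset_erase.mpr ⟨hVA, hxV⟩
      by_cases hU1 : U = {x}
      · apply VD_one V.card Δ (A.erase x) V le_rfl hV hVsub
        rw [hf]
        ext F
        simp only [Finset.mem_filter, Finset.mem_powerset, Finset.subset_erase, hU1,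
          Finset.singleton_subset_iff]
        exact ⟨fun ⟨h1, h2, h3⟩ => ⟨⟨h1, h2⟩, h3⟩, fun ⟨⟨h1, h2⟩, h3⟩ => ⟨h1, h2, h3⟩⟩
      · have hUe : (U.erase x).Nonempty := by
          rw [Finset.erase_nonempty hxU]
          exact (Finset.nontrivial_iff_ne_singleton hxU).mpr hU1
        apply VertexDecomposable.shed Δ x
        · apply VD_one V.card (Δ.del x) (A.erase x) V le_rfl hV hVsub
          rw [del_faces, hf]
          ext F
          simp only [Finset.mem_filter, Finset.mem_powerset, Finset.subset_erase]
          constructor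
          · rintro ⟨⟨hFA, _, hVF⟩, hxF⟩
            exact ⟨⟨hFA, hxF⟩, hVF⟩
          · rintro ⟨⟨hFA, hxF⟩, hVF⟩
            exact ⟨⟨hFA, fun h => hxF (h hxU), hVF⟩, hxF⟩
        · refine ih (Δ.lk x) (A.erase x) (U.erase x) V ?_ hUe hV
            (Finset.erase_subset_erase _ hUA) hVsub ?_
          · have h1 := Finset.card_erase_of_mem hxU
            have h2 := Finset.card_pos.mpr ⟨x, hxU⟩
            omega
          · rw [lk_faces, hf]
            ext F
            simp only [Finset.mem_filter, Finset.mem_powerset, Finset.subset_erase]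
            constructor
            · rintro ⟨⟨hFA, _, hVF⟩, hxF, _, hUiF, _⟩
              exact ⟨⟨hFA, hxF⟩, fun h => hUiF (Finset.subset_insert_iff.mpr h), hVF⟩
            · rintro ⟨⟨hFA, hxF⟩, hUeF, hVF⟩
              refine ⟨⟨hFA, fun h => hUeF ((Finset.erase_subset x U).trans h), hVF⟩, hxF,
                Finset.insert_subset hxA hFA,
                fun h => hUeF (Finset.subset_insert_iff.mp h), fun h => hVF ?_⟩
              rw [Finset.subset_insert_iff, Finset.erase_eq_of_notMem hxV] at h
              exact h
        · intro F hF hfacet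
          rw [lk_faces, Finset.mem_filter, hf, Finset.mem_filter, Finset.mem_powerset] at hF
          obtain ⟨⟨hFA, _, hVF⟩, hxF, hins⟩ := hF
          rw [Finset.mem_filter, Finset.mem_powerset] at hins
          obtain ⟨u, huU, huiF⟩ := Finset.not_subset.mp hins.2.1
          have hux : u ≠ x := fun h => huiF (h ▸ Finset.mem_insert_self x F)
          have huF : u ∉ F := fun h => huiF (Finset.mem_insert_of_mem h)
          have huV : u ∉ V := fun h =>
            Finset.notMem_empty u (hx ▸ Finset.mem_inter_of_mem huU h)
          have hG : insert u F ∈ (Δ.del x).faces := by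
            rw [del_faces, Finset.mem_filter, hf, Finset.mem_filter, Finset.mem_powerset]
            refine ⟨⟨Finset.insert_subset (hUA huU) hFA, ?_, ?_⟩, ?_⟩
            · intro h
              have := h hxU
              rcases Finset.mem_insert.mp this with h' | h'
              · exact hux h'.symm
              · exact hxF h'
            · intro h
              apply hVF
              intro v hv
              rcases Finset.mem_insert.mp (h hv) with h' | h'
              · exact absurd (h' ▸ hv) huV
              · exact h'
            · intro h
              rcases Finset.mem_insert.mp h with h' | h'
              · exact hux h'.symm
              · exact hxF h'
          have := hfacet.2 _ hG (Finset.subset_insert u F)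
          exact huF (this ▸ Finset.mem_insert_self u F)



lemma srIdeal_eq (Δ : SComplex n) :
    srIdeal K Δ = Ideal.span ((mon K) '' (sqmon '' {F | F ∉ Δ.faces})) := by
  rw [srIdeal, Set.image_image]

lemma mem_srIdeal_iff (Δ : SComplex n) (F : Finset (Fin n)) :
    mon K (sqmon F) ∈ srIdeal K Δ ↔ F ∉ Δ.faces := by
  rw [srIdeal_eq, mem_span_mon_iff]
  constructor
  · rintro ⟨s, ⟨G, hG, rfl⟩, hle⟩ hF
    exact hG (Δ.down F hF G (sqmon_le_iff.mp hle))
  · intro hF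
    exact ⟨sqmon F, ⟨F, hF, rfl⟩, le_rfl⟩

lemma minGen_eq_sqmon {Δ : SComplex n} {a : Fin n →₀ ℕ}
    (ha : a ∈ minGens (srIdeal K Δ)) : ∃ G, G ∉ Δ.faces ∧ a = sqmon G := by
  obtain ⟨hmem, hmin⟩ := ha
  rw [srIdeal_eq, mem_span_mon_iff] at hmem
  obtain ⟨s, ⟨G, hG, rfl⟩, hle⟩ := hmem
  refine ⟨G, hG, ?_⟩
  by_contra hne
  have hex : ∃ i, sqmon G i < a i := by
    by_contra hco
    push_neg at hco
    exact hne (le_antisymm (Finsupp.le_def.mpr hco) hle)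
  obtain ⟨i, hi⟩ := hex
  have h1 : Finsupp.single i 1 ≤ a := Finsupp.single_le_iff.mpr (by omega)
  refine hmin (a - Finsupp.single i 1) i (tsub_add_cancel_of_le h1).symm ?_
  rw [srIdeal_eq, mem_span_mon_iff]
  refine ⟨sqmon G, ⟨G, hG, rfl⟩, Finsupp.le_def.mpr fun j => ?_⟩
  rw [Finsupp.tsub_apply]
  by_cases hj : j = i
  · subst hj
    rw [Finsupp.single_eq_same]
    omega
  · rw [Finsupp.single_eq_of_ne' (Ne.symm hj)]
    have := Finsupp.le_def.mp hle j
    omega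

/-- If `I_Δ` is minimally generated by exactly two squarefree
monomials, then `Δ` is vertex decomposable. -/
theorem stmt7 {K : Type} [Field K] {n : ℕ} (Δ : SComplex n)
    (u v : Fin n →₀ ℕ) (huv : u ≠ v)
    (h : minGens (srIdeal K Δ) = {u, v}) :
    VertexDecomposable Δ := by
  classical
  have hu : u ∈ minGens (srIdeal K Δ) := by rw [h]; exact Set.mem_insert u {v}
  have hv : v ∈ minGens (srIdeal K Δ) := by rw [h]; exact Set.mem_insert_of_mem u rfl
  obtain ⟨U, hUf, rfl⟩ := minGen_eq_sqmon hu
  obtain ⟨V, hVf, rfl⟩ := minGen_eq_sqmon hv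
  have hIne : ∀ (b : Fin n →₀ ℕ), (1 : R K n) ∈ srIdeal K Δ → mon K b ∈ srIdeal K Δ := by
    intro b h1
    rw [(Ideal.eq_top_iff_one _).mpr h1]
    exact Submodule.mem_top
  have key : ∀ (W W' : Finset (Fin n)), W = ∅ → sqmon W ∈ minGens (srIdeal K Δ) →
      sqmon W' ∈ minGens (srIdeal K Δ) → sqmon W ≠ sqmon W' → False := by
    intro W W' hW hmW hmW' hne
    have h0 : sqmon W = 0 := by rw [hW]; simp [sqmon]
    have h1 : (1 : R K n) ∈ srIdeal K Δ := by
      have := hmW.1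
      rw [h0] at this
      simpa [mon] using this
    have hW'ne : sqmon W' ≠ 0 := fun hc => hne (by rw [h0, hc])
    obtain ⟨i, hi⟩ := Finsupp.ne_iff.mp hW'ne
    simp only [Finsupp.coe_zero, Pi.zero_apply] at hi
    have hsle : Finsupp.single i 1 ≤ sqmon W' := Finsupp.single_le_iff.mpr (by omega)
    exact hmW'.2 (sqmon W' - Finsupp.single i 1) i (tsub_add_cancel_of_le hsle).symm
      (hIne _ h1)
  have hUne : U.Nonempty := by
    rcases Finset.eq_empty_or_nonempty U with hE | h'
    · exact absurd (key U V hE hu hv huv) not_false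
    · exact h'
  have hVne : V.Nonempty := by
    rcases Finset.eq_empty_or_nonempty V with hE | h'
    · exact absurd (key V U hE hv hu (Ne.symm huv)) not_false
    · exact h'
  have hfaces : Δ.faces = Finset.univ.powerset.filter (fun F => ¬ U ⊆ F ∧ ¬ V ⊆ F) := by
    ext F
    simp only [Finset.mem_filter, Finset.mem_powerset, Finset.subset_univ, true_and]
    constructor
    · intro hF
      exact ⟨fun hUF => hUf (Δ.down F hF U hUF), fun hVF => hVf (Δ.down F hF V hVF)⟩
    · rintro ⟨hUF, hVF⟩
      by_contra hFf
      obtain ⟨g, hg, hgle⟩ := exists_minGen_le ((mem_srIdeal_iff (K:=K) Δ F).mpr hFf)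
      rw [h] at hg
      rcases hg with hg | hg
      · rw [hg] at hgle
        exact hUF (sqmon_le_iff.mp hgle)
      · rw [Set.mem_singleton_iff.mp hg] at hgle
        exact hVF (sqmon_le_iff.mp hgle)
  exact VD_two (U.card + V.card) Δ Finset.univ U V le_rfl hUne hVne
    (Finset.subset_univ U) (Finset.subset_univ V) hfaces


end Paper
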